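/- Let C be an essentially small pretriangulated category (with shift functors and distinguished triangles; its opposite C^op is then also pretriangulated). An additive functor F : C^op → Ab is cohomological (i.e., sends every distinguished triangle X → Y → Z → X[1] of C to an exact sequence F(Z) → F(Y) → F(X) of abelian groups) if and only if the underlying presheaf of sets of F (the composite of F with the forgetful functor Ab → Set) is a filtered colimit of representable presheaves, i.e., an ind-object of Fun(C^op, Set). -/

import Mathlib

universe u

open CategoryTheory CategoryTheory.Limits CategoryTheory.Pretriangulated Opposite ZeroObject

variable {C : Type u} [SmallCategory C] [Preadditive C] [HasZeroObject C]
    [HasShift C ℤ] [∀ n : ℤ, (shiftFunctor C n).Additive] [Pretriangulated C]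

lemma aux_filtered (F : Cᵒᵖ ⥤ AddCommGrpCat.{u}) [F.Additive]
    (hF : ∀ T : Triangle C, T ∈ (distTriang C) →
        Function.Exact ⇑(F.map T.mor₂.op) ⇑(F.map T.mor₁.op)) :
    IsFiltered (F ⋙ forget AddCommGrpCat.{u}).Elementsᵒᵖ := by
  set P : Cᵒᵖ ⥤ Type u := F ⋙ forget AddCommGrpCat.{u} with hP
  have h1 : ∀ A B : P.Elementsᵒᵖ, ∃ (Z : P.Elementsᵒᵖ) (_ : A ⟶ Z) (_ : B ⟶ Z), True := by
    intro A B
    set X' : C := A.unop.1.unop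
    set Y' : C := B.unop.1.unop
    set z : F.obj (op (X' ⊞ Y')) :=
      F.map (biprod.fst : X' ⊞ Y' ⟶ X').op A.unop.2 +
        F.map (biprod.snd : X' ⊞ Y' ⟶ Y').op B.unop.2 with hz
    have ha : P.map (biprod.inl : X' ⟶ X' ⊞ Y').op z = A.unop.2 := by
      show F.map (biprod.inl : X' ⟶ X' ⊞ Y').op
        (F.map (biprod.fst : X' ⊞ Y' ⟶ X').op A.unop.2 +
          F.map (biprod.snd : X' ⊞ Y' ⟶ Y').op B.unop.2) = A.unop.2
      rw [map_add, ← CategoryTheory.comp_apply, ← CategoryTheory.comp_apply,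
        ← F.map_comp, ← F.map_comp, ← op_comp, ← op_comp, biprod.inl_fst, biprod.inl_snd]
      simp
    have hb : P.map (biprod.inr : Y' ⟶ X' ⊞ Y').op z = B.unop.2 := by
      show F.map (biprod.inr : Y' ⟶ X' ⊞ Y').op
        (F.map (biprod.fst : X' ⊞ Y' ⟶ X').op A.unop.2 +
          F.map (biprod.snd : X' ⊞ Y' ⟶ Y').op B.unop.2) = B.unop.2
      rw [map_add, ← CategoryTheory.comp_apply, ← CategoryTheory.comp_apply,
        ← F.map_comp, ← F.map_comp, ← op_comp, ← op_comp, biprod.inr_fst, biprod.inr_snd]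
      simp
    exact ⟨op (P.elementsMk (op (X' ⊞ Y')) z),
      Quiver.Hom.op (⟨(biprod.inl : X' ⟶ X' ⊞ Y').op, ha⟩ :
        P.elementsMk (op (X' ⊞ Y')) z ⟶ A.unop),
      Quiver.Hom.op (⟨(biprod.inr : Y' ⟶ X' ⊞ Y').op, hb⟩ :
        P.elementsMk (op (X' ⊞ Y')) z ⟶ B.unop), trivial⟩
  have h2 : ∀ (A B : P.Elementsᵒᵖ) (f g : A ⟶ B), ∃ (Z : P.Elementsᵒᵖ) (h : B ⟶ Z),
      f ≫ h = g ≫ h := by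
    intro A B f g
    set X' : C := A.unop.1.unop
    set Y' : C := B.unop.1.unop
    set u : X' ⟶ Y' := f.unop.1.unop with hu
    set v : X' ⟶ Y' := g.unop.1.unop with hv
    obtain ⟨Z, w, d, hT⟩ := Pretriangulated.distinguished_cocone_triangle (u - v)
    have h0 : F.map (u - v).op B.unop.2 = 0 := by
      have : (u - v).op = u.op - v.op := map_sub (opHom X' Y') u v
      rw [this, F.map_sub]
      have hfu : F.map u.op B.unop.2 = A.unop.2 := f.unop.2
      have hgv : F.map v.op B.unop.2 = A.unop.2 := g.unop.2
      show F.map u.op B.unop.2 - F.map v.op B.unop.2 = 0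
      rw [hfu, hgv, sub_self]
    obtain ⟨z, hz⟩ := (hF _ hT B.unop.2).mp h0
    refine ⟨op (P.elementsMk (op Z) z),
      Quiver.Hom.op (⟨w.op, hz⟩ : P.elementsMk (op Z) z ⟶ B.unop), ?_⟩
    apply Quiver.Hom.unop_inj
    apply Subtype.ext
    show w.op ≫ f.unop.1 = w.op ≫ g.unop.1
    apply Quiver.Hom.unop_inj
    show u ≫ w = v ≫ w
    have := comp_distTriang_mor_zero₁₂ _ hT
    rw [← sub_eq_zero, ← Preadditive.sub_comp]
    exact this
  have h3 : Nonempty P.Elementsᵒᵖ := ⟨op (P.elementsMk (op (0 : C)) (0 : F.obj (op (0 : C))))⟩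
  exact { cocone_objs := h1, cocone_maps := h2, nonempty := h3 }

lemma aux_forward (F : Cᵒᵖ ⥤ AddCommGrpCat.{u}) [F.Additive]
    (hF : ∀ T : Triangle C, T ∈ (distTriang C) →
        Function.Exact ⇑(F.map T.mor₂.op) ⇑(F.map T.mor₁.op)) :
    ∃ (I : Type u) (_ : SmallCategory I) (_ : IsFiltered I) (X : I ⥤ C),
        Nonempty (colimit (X ⋙ yoneda) ≅ F ⋙ forget AddCommGrpCat.{u}) := by
  refine ⟨(F ⋙ forget AddCommGrpCat.{u}).Elementsᵒᵖ, inferInstance, aux_filtered F hF,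
    (CategoryOfElements.π (F ⋙ forget AddCommGrpCat.{u})).leftOp,
    ⟨HasColimit.isoOfNatIso (Functor.isoWhiskerLeft _ (uliftYonedaIsoYoneda.{0} (C := C))).symm ≪≫
      (colimit.isColimit _).coconePointUniqueUpToIso
      (Presheaf.colimitOfRepresentable (F ⋙ forget AddCommGrpCat.{u}))⟩⟩

lemma aux_backward (F : Cᵒᵖ ⥤ AddCommGrpCat.{u}) [F.Additive]
    (I : Type u) [SmallCategory I] [IsFiltered I] (X : I ⥤ C)
    (e : colimit (X ⋙ yoneda) ≅ F ⋙ forget AddCommGrpCat.{u})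
    (T : Triangle C) (hT : T ∈ distTriang C) :
    Function.Exact ⇑(F.map T.mor₂.op) ⇑(F.map T.mor₁.op) := by
  have hcomp : F.map T.mor₂.op ≫ F.map T.mor₁.op = 0 := by
    rw [← F.map_comp, ← op_comp, comp_distTriang_mor_zero₁₂ _ hT]
    have h00 : ((0 : T.obj₁ ⟶ T.obj₃)).op = 0 := map_zero (opHom _ _)
    rw [h00, F.map_zero]
  intro y
  constructor
  · intro h0
    set O : C := 0 with hO
    set t : T.obj₁ ⟶ O := 0 with ht
    obtain ⟨i, g, hg⟩ := Types.jointly_surjective'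
      ((colimitObjIsoColimitCompEvaluation (X ⋙ yoneda) (op T.obj₂)).hom
        (e.inv.app (op T.obj₂) y))
    obtain ⟨j, c, hc⟩ := Types.jointly_surjective'
      ((colimitObjIsoColimitCompEvaluation (X ⋙ yoneda) (op O)).hom
        (e.inv.app (op O) ((0 : F.obj (op O)) : (F ⋙ forget AddCommGrpCat.{u}).obj (op O))))
    have hy1 : (colimit.ι (X ⋙ yoneda) i).app (op T.obj₂) g = e.inv.app (op T.obj₂) y := by
      have h := ConcreteCategory.congr_hom (colimitObjIsoColimitCompEvaluation_ι_inv (X ⋙ yoneda) i (op T.obj₂)) g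
      dsimp at h
      rw [← h, hg]
      simp
    have hw1 : (colimit.ι (X ⋙ yoneda) j).app (op O) c =
        e.inv.app (op O) ((0 : F.obj (op O)) : (F ⋙ forget AddCommGrpCat.{u}).obj (op O)) := by
      have h := ConcreteCategory.congr_hom (colimitObjIsoColimitCompEvaluation_ι_inv (X ⋙ yoneda) j (op O)) c
      dsimp at h
      rw [← h, hc]
      simp
    -- key equality in (colimit (X ⋙ yoneda)).obj (op T.obj₁)
    have key : (colimit (X ⋙ yoneda)).map T.mor₁.op (e.inv.app (op T.obj₂) y) =
        (colimit (X ⋙ yoneda)).map t.op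
          (e.inv.app (op O) ((0 : F.obj (op O)) : (F ⋙ forget AddCommGrpCat.{u}).obj (op O))) := by
      have n1 := ConcreteCategory.congr_hom (e.inv.naturality T.mor₁.op) y
      have n2 := ConcreteCategory.congr_hom (e.inv.naturality t.op)
        ((0 : F.obj (op O)) : (F ⋙ forget AddCommGrpCat.{u}).obj (op O))
      dsimp at n1 n2
      rw [← n1, ← n2]
      exact congrArg (e.inv.app (op T.obj₁)) (by rw [h0, map_zero])
    -- translate to colimit equality
    have key2 : (colimit.ι (X ⋙ yoneda) i).app (op T.obj₁) (T.mor₁ ≫ g) =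
        (colimit.ι (X ⋙ yoneda) j).app (op T.obj₁) (0 : T.obj₁ ⟶ X.obj j) := by
      have m1 := ConcreteCategory.congr_hom ((colimit.ι (X ⋙ yoneda) i).naturality T.mor₁.op) g
      have m2 := ConcreteCategory.congr_hom ((colimit.ι (X ⋙ yoneda) j).naturality t.op) c
      dsimp at m1 m2
      rw [m1, hy1, key, ← hw1, ← m2]
      exact congrArg ((colimit.ι (X ⋙ yoneda) j).app (op T.obj₁)) (by rw [ht]; simp)
    have key3 : colimit.ι ((X ⋙ yoneda) ⋙ (evaluation Cᵒᵖ (Type u)).obj (op T.obj₁)) i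
          (T.mor₁ ≫ g) =
        colimit.ι ((X ⋙ yoneda) ⋙ (evaluation Cᵒᵖ (Type u)).obj (op T.obj₁)) j
          (0 : T.obj₁ ⟶ X.obj j) := by
      have a1 := ConcreteCategory.congr_hom
        (colimitObjIsoColimitCompEvaluation_ι_app_hom (X ⋙ yoneda) i (op T.obj₁)) (T.mor₁ ≫ (g : T.obj₂ ⟶ X.obj i) : T.obj₁ ⟶ X.obj i)
      have a2 := ConcreteCategory.congr_hom
        (colimitObjIsoColimitCompEvaluation_ι_app_hom (X ⋙ yoneda) j (op T.obj₁))
        (0 : T.obj₁ ⟶ X.obj j)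
      dsimp at a1 a2
      rw [← a1, ← a2, key2]
    obtain ⟨k, α, β, hk⟩ := (Types.FilteredColimit.colimit_eq_iff _).mp key3
    dsimp at hk
    have hzero : T.mor₁ ≫ (g ≫ X.map α) = 0 := by
      rw [← Category.assoc, hk, zero_comp]
    obtain ⟨q, hq⟩ := Triangle.yoneda_exact₂ T hT (g ≫ X.map α) hzero
    refine ⟨e.hom.app (op T.obj₃) ((colimit.ι (X ⋙ yoneda) k).app (op T.obj₃) q), ?_⟩
    have n3 := ConcreteCategory.congr_hom (e.hom.naturality T.mor₂.op)
      ((colimit.ι (X ⋙ yoneda) k).app (op T.obj₃) q)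
    dsimp at n3
    show F.map T.mor₂.op (e.hom.app (op T.obj₃) ((colimit.ι (X ⋙ yoneda) k).app (op T.obj₃) q)) = y
    have m3 := ConcreteCategory.congr_hom ((colimit.ι (X ⋙ yoneda) k).naturality T.mor₂.op) q
    dsimp at m3
    have hw := ConcreteCategory.congr_hom (NatTrans.congr_app (colimit.w (X ⋙ yoneda) α) (op T.obj₂)) g
    dsimp at hw
    rw [← n3, ← m3, ← hq, hw, hy1]
    exact ConcreteCategory.congr_hom (e.inv_hom_id_app (op T.obj₂)) y
  · rintro ⟨z, rfl⟩
    calc F.map T.mor₁.op (F.map T.mor₂.op z)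
        = (F.map T.mor₂.op ≫ F.map T.mor₁.op) z := rfl
      _ = 0 := by rw [hcomp]; rfl

/-- For an essentially small pretriangulated category `C`, an additive functor
`F : Cᵒᵖ ⥤ Ab` is cohomological (sends distinguished triangles `X → Y → Z → X⟦1⟧` to exact
sequences `F Z → F Y → F X`) if and only if its underlying presheaf of sets is a filtered
colimit of representable presheaves. -/
theorem statement_3 {C : Type u} [SmallCategory C] [Preadditive C] [HasZeroObject C]
    [HasShift C ℤ] [∀ n : ℤ, (shiftFunctor C n).Additive] [Pretriangulated C]
    (F : Cᵒᵖ ⥤ AddCommGrpCat.{u}) [F.Additive] :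
    (∀ T : Triangle C, T ∈ (distTriang C) →
        Function.Exact ⇑(F.map T.mor₂.op) ⇑(F.map T.mor₁.op)) ↔
      ∃ (I : Type u) (_ : SmallCategory I) (_ : IsFiltered I) (X : I ⥤ C),
        Nonempty (colimit (X ⋙ yoneda) ≅ F ⋙ forget AddCommGrpCat.{u}) := by
  constructor
  · exact aux_forward F
  · rintro ⟨I, _, _, X, ⟨e⟩⟩ T hT
    exact aux_backward F I X e T hT
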